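/- Let N_f, N_D, N_c, M be positive integers with 2 ≤ N_c ≤ N_f and 2 ≤ M ≤ N_D, let α ∈ ℂ with α ≠ 0, and let p₀, q₀ be integers with 0 ≤ p₀ < N_f and 0 ≤ q₀ < N_D. Define h(i,m) = α · exp(−2πi·i·p₀/N_f) · exp(2πi·m·q₀/N_D) for 0 ≤ i < N_c, 0 ≤ m < M, and the delay-Doppler spectrum magnitude P(p,q) = (1/N_D)·|Σ_{m=0}^{M−1} Σ_{i=0}^{N_c−1} h(i,m) · exp(2πi·p·i/N_f) · exp(−2πi·q·m/N_D)| for integers p, q. Then P(p₀,q₀) = N_c·M·|α|/N_D, and for every pair of integers (p,q) with 0 ≤ p < N_f, 0 ≤ q < N_D and (p,q) ≠ (p₀,q₀) one has P(p,q) < P(p₀,q₀); i.e., the spectral peak of the 2D-FFT spectrum is attained uniquely at the true delay-Doppler index. -/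

import Mathlib

open Finset Complex


lemma my_abs_sum_pow_le (z : ℂ) (hz : ‖z‖ = 1) (n : ℕ) :
    ‖∑ k ∈ Finset.range n, z ^ k‖ ≤ n := by
  calc ‖∑ k ∈ Finset.range n, z ^ k‖
      ≤ ∑ k ∈ Finset.range n, ‖z ^ k‖ := norm_sum_le _ _
    _ = n := by simp [norm_pow, hz]

lemma my_abs_sum_pow_lt (z : ℂ) (hz : ‖z‖ = 1) (hz1 : z ≠ 1) {n : ℕ} (hn : 2 ≤ n) :
    ‖∑ k ∈ Finset.range n, z ^ k‖ < n := by
  have hsq : z.re * z.re + z.im * z.im = 1 := by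
    have := Complex.sq_norm z
    rw [hz] at this
    simpa [Complex.normSq_apply, eq_comm] using this
  have hre : z.re < 1 := by
    rcases lt_or_eq_of_le ((Complex.re_le_norm z).trans_eq hz) with h | h
    · exact h
    · exfalso
      apply hz1
      have him : z.im = 0 := by nlinarith
      apply Complex.ext <;> simp [h, him]
  have h1z : ‖1 + z‖ < 2 := by
    have h2 : (‖1 + z‖) ^ 2 < 2 ^ 2 := by
      rw [Complex.sq_norm, Complex.normSq_apply]
      simp only [Complex.add_re, Complex.add_im, Complex.one_re, Complex.one_im]
      nlinarith
    exact lt_of_pow_lt_pow_left₀ 2 (by norm_num) h2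
  have hsplit : ∑ k ∈ Finset.range n, z ^ k
      = (1 + z) + ∑ k ∈ Finset.Ico 2 n, z ^ k := by
    rw [Finset.range_eq_Ico, ← Finset.sum_Ico_consecutive _ (by norm_num : 0 ≤ 2) hn]
    congr 1
    rw [← Finset.range_eq_Ico]
    simp [Finset.sum_range_succ]
  have h2sum : ‖∑ k ∈ Finset.Ico 2 n, z ^ k‖ ≤ (n : ℝ) - 2 := by
    calc ‖∑ k ∈ Finset.Ico 2 n, z ^ k‖
        ≤ ∑ k ∈ Finset.Ico 2 n, ‖z ^ k‖ := norm_sum_le _ _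
      _ = ((n - 2 : ℕ) : ℝ) := by simp [norm_pow, hz]
      _ = (n : ℝ) - 2 := by
          rw [Nat.cast_sub hn]; norm_num
  calc ‖∑ k ∈ Finset.range n, z ^ k‖
      ≤ ‖1 + z‖ + ‖∑ k ∈ Finset.Ico 2 n, z ^ k‖ := by
        rw [hsplit]; exact norm_add_le _ _
    _ < 2 + ((n : ℝ) - 2) := by linarith
    _ = n := by ring

lemma my_exp_int_ne_one (a N : ℤ) (hN : (0:ℤ) < N) (ha : a ≠ 0) (h1 : -N < a) (h2 : a < N) :
    Complex.exp (((2 * Real.pi * (a : ℝ) / (N : ℝ) : ℝ) : ℂ) * Complex.I) ≠ 1 := by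
  intro hone
  rw [Complex.exp_eq_one_iff] at hone
  obtain ⟨n, hn⟩ := hone
  have hreal : (2 * Real.pi * (a : ℝ) / (N : ℝ)) = (n : ℝ) * (2 * Real.pi) := by
    have hC : ((2 * Real.pi * (a : ℝ) / (N : ℝ) : ℝ) : ℂ) = (((n : ℝ) * (2 * Real.pi) : ℝ) : ℂ) := by
      apply mul_right_cancel₀ Complex.I_ne_zero
      rw [hn]; push_cast; ring
    exact_mod_cast hC
  have hNr : (0:ℝ) < (N : ℝ) := by exact_mod_cast hN
  have h2pi : (0:ℝ) < 2 * Real.pi := by positivity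
  have hmul : 2 * Real.pi * (a : ℝ) = 2 * Real.pi * ((n : ℝ) * (N : ℝ)) := by
    field_simp at hreal
    nlinarith [hreal]
  have haR : (a : ℝ) = (n : ℝ) * (N : ℝ) := mul_left_cancel₀ (ne_of_gt h2pi) hmul
  have haZ : a = n * N := by exact_mod_cast haR
  rcases lt_trichotomy n 0 with hn0 | hn0 | hn0
  · have : n * N ≤ (-1) * N := mul_le_mul_of_nonneg_right (by omega) (le_of_lt hN)
    linarith
  · rw [hn0, zero_mul] at haZ; exact ha haZ
  · have : (1:ℤ) * N ≤ n * N := mul_le_mul_of_nonneg_right (by omega) (le_of_lt hN)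
    linarith

/-- The 2D-FFT delay-Doppler spectrum (15) of a noiseless single-path on-grid
channel attains its peak `N_c·M·|α|/N_D` exactly at the true grid index
`(p₀, q₀)`, and strictly below that value at every other grid index. -/
theorem spectrum_peak_unique_on_grid
    (N_f N_D N_c M : ℕ)
    (hNc : 2 ≤ N_c) (hcf : N_c ≤ N_f) (hM : 2 ≤ M) (hMD : M ≤ N_D)
    (α : ℂ) (hα : α ≠ 0)
    (p₀ q₀ : ℤ) (hp₀ : 0 ≤ p₀ ∧ p₀ < N_f) (hq₀ : 0 ≤ q₀ ∧ q₀ < N_D)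
    (h : ℕ → ℕ → ℂ)
    (hh : ∀ i m, h i m =
      α * Complex.exp (-(2 * Real.pi * Complex.I * i * p₀ / N_f)) *
        Complex.exp (2 * Real.pi * Complex.I * m * q₀ / N_D))
    (P : ℤ → ℤ → ℝ)
    (hP : ∀ p q : ℤ, P p q = (1 / (N_D : ℝ)) *
      ‖∑ m ∈ range M, ∑ i ∈ range N_c,
        h i m * Complex.exp (2 * Real.pi * Complex.I * p * i / N_f) *
          Complex.exp (-(2 * Real.pi * Complex.I * q * m / N_D))‖) :
    P p₀ q₀ = (N_c : ℝ) * (M : ℝ) * ‖α‖ / (N_D : ℝ) ∧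
      ∀ p q : ℤ, 0 ≤ p → p < N_f → 0 ≤ q → q < N_D →
        (p, q) ≠ (p₀, q₀) → P p q < P p₀ q₀ := by
  set θp : ℤ → ℝ := fun p => 2 * Real.pi * ((p : ℝ) - (p₀ : ℝ)) / (N_f : ℝ) with hθp
  set θq : ℤ → ℝ := fun q => 2 * Real.pi * ((q₀ : ℝ) - (q : ℝ)) / (N_D : ℝ) with hθq
  set W : ℤ → ℂ := fun p => Complex.exp ((θp p : ℂ) * Complex.I) with hWdef
  set Z : ℤ → ℂ := fun q => Complex.exp ((θq q : ℂ) * Complex.I) with hZdef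
  have key : ∀ p q : ℤ, P p q = (1 / (N_D : ℝ)) *
      (‖α‖ * ‖∑ i ∈ range N_c, W p ^ i‖ *
        ‖∑ m ∈ range M, Z q ^ m‖) := by
    intro p q
    rw [hP]
    congr 1
    have hterm : ∀ m ∈ range M, ∀ i ∈ range N_c,
        h i m * Complex.exp (2 * Real.pi * Complex.I * p * i / N_f) *
          Complex.exp (-(2 * Real.pi * Complex.I * q * m / N_D))
        = α * W p ^ i * Z q ^ m := by
      intro m _ i _
      have hW : W p ^ i = Complex.exp ((i : ℂ) * ((θp p : ℂ) * Complex.I)) :=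
        (Complex.exp_nat_mul _ i).symm
      have hZ : Z q ^ m = Complex.exp ((m : ℂ) * ((θq q : ℂ) * Complex.I)) :=
        (Complex.exp_nat_mul _ m).symm
      rw [hh, hW, hZ]
      simp only [mul_assoc, ← Complex.exp_add]
      congr 2
      rw [hθp, hθq]
      push_cast
      have hNf : ((N_f : ℂ)) ≠ 0 := by
        exact_mod_cast Nat.cast_ne_zero.mpr (by omega)
      have hND : ((N_D : ℂ)) ≠ 0 := by
        exact_mod_cast Nat.cast_ne_zero.mpr (by omega)
      field_simp
      ring
    rw [Finset.sum_congr rfl (fun m hm => Finset.sum_congr rfl (hterm m hm))]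
    have hfac : ∑ m ∈ range M, ∑ i ∈ range N_c, α * W p ^ i * Z q ^ m
        = α * (∑ i ∈ range N_c, W p ^ i) * (∑ m ∈ range M, Z q ^ m) := by
      rw [Finset.sum_comm]
      rw [Finset.sum_congr rfl (fun i _ => (Finset.mul_sum _ _ _).symm)]
      rw [← Finset.sum_mul, ← Finset.mul_sum]
    rw [hfac, norm_mul, norm_mul]
  have hWabs : ∀ p, ‖W p‖ = 1 := fun p => Complex.norm_exp_ofReal_mul_I _
  have hZabs : ∀ q, ‖Z q‖ = 1 := fun q => Complex.norm_exp_ofReal_mul_I _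
  have hW0 : W p₀ = 1 := by
    have : θp p₀ = 0 := by rw [hθp]; simp
    rw [hWdef]; simp [this]
  have hZ0 : Z q₀ = 1 := by
    have : θq q₀ = 0 := by rw [hθq]; simp
    rw [hZdef]; simp [this]
  have hpeak : P p₀ q₀ = (N_c : ℝ) * (M : ℝ) * ‖α‖ / (N_D : ℝ) := by
    rw [key p₀ q₀, hW0, hZ0]
    simp only [one_pow, Finset.sum_const, Finset.card_range, nsmul_eq_mul, mul_one]
    rw [Complex.norm_natCast, Complex.norm_natCast]
    ring
  refine ⟨hpeak, fun p q hp0 hpN hq0 hqN hne => ?_⟩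
  have habs : 0 < ‖α‖ := norm_pos_iff.mpr hα
  have hND : (0:ℝ) < (N_D : ℝ) := by
    have : 0 < N_D := by omega
    exact_mod_cast this
  have hSAle : ‖∑ i ∈ range N_c, W p ^ i‖ ≤ (N_c : ℝ) :=
    my_abs_sum_pow_le _ (hWabs p) _
  have hSBle : ‖∑ m ∈ range M, Z q ^ m‖ ≤ (M : ℝ) :=
    my_abs_sum_pow_le _ (hZabs q) _
  have hSA0 : 0 ≤ ‖∑ i ∈ range N_c, W p ^ i‖ := norm_nonneg _
  have hSB0 : 0 ≤ ‖∑ m ∈ range M, Z q ^ m‖ := norm_nonneg _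
  have hbound : ‖∑ i ∈ range N_c, W p ^ i‖ *
      ‖∑ m ∈ range M, Z q ^ m‖ < (N_c : ℝ) * (M : ℝ) := by
    by_cases hpp : p = p₀
    · have hqq : q ≠ q₀ := by
        intro hq; exact hne (by rw [hpp, hq])
      have hZne : Z q ≠ 1 := by
        have hθ : θq q = 2 * Real.pi * ((q₀ - q : ℤ) : ℝ) / ((N_D : ℤ) : ℝ) := by
          rw [hθq]; push_cast; ring
        rw [hZdef]
        simp only [hθ]
        exact my_exp_int_ne_one (q₀ - q) (N_D : ℤ) (by exact_mod_cast (by omega : (0:ℤ) < N_D))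
          (by omega) (by omega) (by omega)
      have hSBlt : ‖∑ m ∈ range M, Z q ^ m‖ < (M : ℝ) :=
        my_abs_sum_pow_lt _ (hZabs q) hZne hM
      have hNc0 : (0:ℝ) < (N_c : ℝ) := by exact_mod_cast Nat.pos_of_ne_zero (by omega)
      calc ‖∑ i ∈ range N_c, W p ^ i‖ * ‖∑ m ∈ range M, Z q ^ m‖
          ≤ (N_c : ℝ) * ‖∑ m ∈ range M, Z q ^ m‖ :=
            mul_le_mul_of_nonneg_right hSAle hSB0
        _ < (N_c : ℝ) * (M : ℝ) := by
            exact mul_lt_mul_of_pos_left hSBlt hNc0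
    · have hWne : W p ≠ 1 := by
        have hθ : θp p = 2 * Real.pi * ((p - p₀ : ℤ) : ℝ) / ((N_f : ℤ) : ℝ) := by
          rw [hθp]; push_cast; ring
        rw [hWdef]
        simp only [hθ]
        exact my_exp_int_ne_one (p - p₀) (N_f : ℤ) (by omega) (by omega) (by omega) (by omega)
      have hSAlt : ‖∑ i ∈ range N_c, W p ^ i‖ < (N_c : ℝ) :=
        my_abs_sum_pow_lt _ (hWabs p) hWne hNc
      have hM0 : (0:ℝ) < (M : ℝ) := by exact_mod_cast Nat.pos_of_ne_zero (by omega)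
      calc ‖∑ i ∈ range N_c, W p ^ i‖ * ‖∑ m ∈ range M, Z q ^ m‖
          ≤ ‖∑ i ∈ range N_c, W p ^ i‖ * (M : ℝ) :=
            mul_le_mul_of_nonneg_left hSBle hSA0
        _ < (N_c : ℝ) * (M : ℝ) := mul_lt_mul_of_pos_right hSAlt hM0
  rw [key p q, hpeak]
  have h1 : ‖α‖ * ‖∑ i ∈ range N_c, W p ^ i‖ *
      ‖∑ m ∈ range M, Z q ^ m‖
      < ‖α‖ * ((N_c : ℝ) * (M : ℝ)) := by
    calc ‖α‖ * ‖∑ i ∈ range N_c, W p ^ i‖ *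
        ‖∑ m ∈ range M, Z q ^ m‖
        = ‖α‖ * (‖∑ i ∈ range N_c, W p ^ i‖ *
            ‖∑ m ∈ range M, Z q ^ m‖) := by ring
      _ < ‖α‖ * ((N_c : ℝ) * (M : ℝ)) := mul_lt_mul_of_pos_left hbound habs
  calc (1 / (N_D : ℝ)) * (‖α‖ * ‖∑ i ∈ range N_c, W p ^ i‖ *
      ‖∑ m ∈ range M, Z q ^ m‖)
      < (1 / (N_D : ℝ)) * (‖α‖ * ((N_c : ℝ) * (M : ℝ))) :=
        mul_lt_mul_of_pos_left h1 (by positivity)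
    _ = (N_c : ℝ) * (M : ℝ) * ‖α‖ / (N_D : ℝ) := by ring
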